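/- Averaged contraction defect over the sphere: let d ≥ 2, X ∈ ℝ^d, k ∈ 𝕊^{d-1}, and let B : 𝕊^{d-1} → [0,∞) be a function of k·σ only. Then ∫_{𝕊^{d-1}} (|X|² - |P_{kσ}X|²) B(k·σ) dσ = ((d-2)/(d-1)) · (∫_{𝕊^{d-1}} [1-(k·σ)²] B(k·σ) dσ) · |Π_{k⊥}X|². -/

import Mathlib

open MeasureTheory
open scoped RealInnerProductSpace

/-- The connection operator `P_{kσ}(x) = (k·σ)x + (x·k)σ - (σ·x)k`. -/
noncomputable def Pks {d : ℕ} (k σ x : EuclideanSpace ℝ (Fin d)) : EuclideanSpace ℝ (Fin d) :=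
  ⟪k, σ⟫ • x + ⟪x, k⟫ • σ - ⟪σ, x⟫ • k

section Aux

variable {d : ℕ}

/-- Substitution by a linear isometry equivalence in a sphere integral with respect to
Hausdorff measure. -/
lemma subst_refl_aux (R : EuclideanSpace ℝ (Fin d) ≃ₗᵢ[ℝ] EuclideanSpace ℝ (Fin d))
    (f : EuclideanSpace ℝ (Fin d) → ℝ) (s : ℝ) :
    ∫ σ in Metric.sphere (0 : EuclideanSpace ℝ (Fin d)) 1, f (R σ) ∂μH[s]
      = ∫ σ in Metric.sphere (0 : EuclideanSpace ℝ (Fin d)) 1, f σ ∂μH[s] := by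
  have hmp : MeasurePreserving R μH[s] μH[s] :=
    R.toIsometryEquiv.measurePreserving_hausdorffMeasure s
  have hemb : MeasurableEmbedding R :=
    R.toIsometryEquiv.toHomeomorph.measurableEmbedding
  have hpre : (R : EuclideanSpace ℝ (Fin d) → EuclideanSpace ℝ (Fin d)) ⁻¹'
      Metric.sphere (0 : EuclideanSpace ℝ (Fin d)) 1
      = Metric.sphere (0 : EuclideanSpace ℝ (Fin d)) 1 := by
    ext x; simp [Metric.mem_sphere, dist_eq_norm]
  calc ∫ σ in Metric.sphere (0 : EuclideanSpace ℝ (Fin d)) 1, f (R σ) ∂μH[s]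
      = ∫ σ in (R : EuclideanSpace ℝ (Fin d) → EuclideanSpace ℝ (Fin d)) ⁻¹'
          Metric.sphere (0 : EuclideanSpace ℝ (Fin d)) 1, f (R σ) ∂μH[s] := by rw [hpre]
    _ = ∫ σ in Metric.sphere (0 : EuclideanSpace ℝ (Fin d)) 1, f σ ∂μH[s] :=
        hmp.setIntegral_preimage_emb hemb f _

lemma pks_defect_aux (k σ X : EuclideanSpace ℝ (Fin d)) (hk : ‖k‖ = 1) (hσ : ‖σ‖ = 1) :
    ‖X‖ ^ 2 - ‖Pks k σ X‖ ^ 2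
      = (1 - ⟪k, σ⟫ ^ 2) * ‖X - ⟪k, X⟫ • k‖ ^ 2 - ⟪σ, X - ⟪k, X⟫ • k⟫ ^ 2 := by
  have hkk : ⟪k, k⟫ = 1 := by
    rw [real_inner_self_eq_norm_sq, hk]; norm_num
  have hσσ : ⟪σ, σ⟫ = 1 := by
    rw [real_inner_self_eq_norm_sq, hσ]; norm_num
  rw [← real_inner_self_eq_norm_sq X, ← real_inner_self_eq_norm_sq (Pks k σ X),
    ← real_inner_self_eq_norm_sq (X - ⟪k, X⟫ • k)]
  simp only [Pks, inner_sub_left, inner_sub_right, inner_add_left, inner_add_right,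
    real_inner_smul_left, real_inner_smul_right, hkk, hσσ]
  rw [real_inner_comm σ k, real_inner_comm X k, real_inner_comm X σ]
  ring

end Aux

set_option maxHeartbeats 1000000 in
/-- **Averaged contraction defect over the sphere.**
For `d ≥ 2`, `X ∈ ℝ^d`, a unit vector `k` and a nonnegative kernel `B` depending only on
`k·σ`, one has
`∫_{𝕊^{d-1}} (|X|² - |P_{kσ}X|²) B(k·σ) dσ
  = ((d-2)/(d-1)) (∫_{𝕊^{d-1}} (1-(k·σ)²) B(k·σ) dσ) |Π_{k⊥}X|²`,
where the sphere carries its `(d-1)`-dimensional Hausdorff (surface) measure. -/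
theorem averaged_contraction_defect (d : ℕ) (hd : 2 ≤ d)
    (X k : EuclideanSpace ℝ (Fin d)) (hk : ‖k‖ = 1)
    (B : ℝ → ℝ) (hB : ∀ t, 0 ≤ B t) (hBm : Measurable B)
    (hInt : IntegrableOn (fun σ => (1 - ⟪k, σ⟫ ^ 2) * B ⟪k, σ⟫)
      (Metric.sphere (0 : EuclideanSpace ℝ (Fin d)) 1) μH[(d : ℝ) - 1]) :
    ∫ σ in Metric.sphere (0 : EuclideanSpace ℝ (Fin d)) 1,
        (‖X‖ ^ 2 - ‖Pks k σ X‖ ^ 2) * B ⟪k, σ⟫ ∂μH[(d : ℝ) - 1]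
      = ((d : ℝ) - 2) / ((d : ℝ) - 1)
        * (∫ σ in Metric.sphere (0 : EuclideanSpace ℝ (Fin d)) 1,
            (1 - ⟪k, σ⟫ ^ 2) * B ⟪k, σ⟫ ∂μH[(d : ℝ) - 1])
        * ‖X - ⟪k, X⟫ • k‖ ^ 2 := by
  classical
  set S : Set (EuclideanSpace ℝ (Fin d)) := Metric.sphere (0 : EuclideanSpace ℝ (Fin d)) 1
    with hS
  have hSm : MeasurableSet S := Metric.isClosed_sphere.measurableSet
  set μ : Measure (EuclideanSpace ℝ (Fin d)) := μH[(d : ℝ) - 1] with hμ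
  set Y : EuclideanSpace ℝ (Fin d) := X - ⟪k, X⟫ • k with hYdef
  have hkk : ⟪k, k⟫ = 1 := by rw [real_inner_self_eq_norm_sq, hk]; norm_num
  have hkY : ⟪k, Y⟫ = 0 := by
    rw [hYdef, inner_sub_right, real_inner_smul_right, hkk, mul_one, sub_self]
  have hknz : k ≠ 0 := by intro h; rw [h] at hk; simp at hk
  set K : Submodule ℝ (EuclideanSpace ℝ (Fin d)) := (ℝ ∙ k)ᗮ with hK
  have hYK : Y ∈ K := Submodule.mem_orthogonal_singleton_iff_inner_right.2 hkY
  -- dimension of K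
  have hnK : Module.finrank ℝ K + 1 = d := by
    have h1 : Module.finrank ℝ (ℝ ∙ k) = 1 := finrank_span_singleton hknz
    have h2 := Submodule.finrank_add_finrank_orthogonal
      (𝕜 := ℝ) (E := EuclideanSpace ℝ (Fin d)) (ℝ ∙ k)
    rw [h1, finrank_euclideanSpace_fin, ← hK] at h2
    omega
  set n : ℕ := Module.finrank ℝ K with hn
  have hn1 : 1 ≤ n := by omega
  have hnR : (n : ℝ) = (d : ℝ) - 1 := by
    have : ((n : ℝ) + 1) = (d : ℝ) := by exact_mod_cast congrArg (Nat.cast (R := ℝ)) hnK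
    linarith
  have hnne : (n : ℝ) ≠ 0 := by positivity
  set b : OrthonormalBasis (Fin n) ℝ K := stdOrthonormalBasis ℝ K with hb
  set e : Fin n → EuclideanSpace ℝ (Fin d) := fun i => (b i : EuclideanSpace ℝ (Fin d)) with he
  set i0 : Fin n := ⟨0, by omega⟩ with hi0
  have heK : ∀ i, e i ∈ K := fun i => (b i).2
  have hke : ∀ i, ⟪k, e i⟫ = 0 := fun i =>
    Submodule.mem_orthogonal_singleton_iff_inner_right.1 (heK i)
  have hene : ∀ i, ‖e i‖ = 1 := fun i => by
    have := b.orthonormal.1 i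
    exact b.orthonormal.norm_eq_one i
  have hee : ∀ i j, i ≠ j → ⟪e i, e j⟫ = 0 := fun i j hij => b.orthonormal.2 hij
  -- expansion of inner products of elements of K
  have hexp : ∀ u v : EuclideanSpace ℝ (Fin d), u ∈ K → v ∈ K →
      ⟪u, v⟫ = ∑ i, ⟪u, e i⟫ * ⟪e i, v⟫ := by
    intro u v hu hv
    have h := b.sum_inner_mul_inner (⟨u, hu⟩ : K) (⟨v, hv⟩ : K)
    calc ⟪u, v⟫ = ∑ i, ⟪(⟨u, hu⟩ : K), b i⟫ * ⟪b i, (⟨v, hv⟩ : K)⟫ := h.symm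
      _ = ∑ i, ⟪u, e i⟫ * ⟪e i, v⟫ := by
          refine Finset.sum_congr rfl fun i _ => ?_
          rw [Submodule.coe_inner, Submodule.coe_inner]
  -- the perpendicular part of σ
  set w : EuclideanSpace ℝ (Fin d) → EuclideanSpace ℝ (Fin d) :=
    fun σ => σ - ⟪k, σ⟫ • k with hw
  have hwK : ∀ σ, w σ ∈ K := by
    intro σ
    refine Submodule.mem_orthogonal_singleton_iff_inner_right.2 ?_
    simp only [hw]
    rw [inner_sub_right, real_inner_smul_right, hkk, mul_one, sub_self]
  have hinnw : ∀ (σ v : EuclideanSpace ℝ (Fin d)), v ∈ K → ⟪σ, v⟫ = ⟪w σ, v⟫ := by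
    intro σ v hv
    have hkv : ⟪k, v⟫ = 0 := Submodule.mem_orthogonal_singleton_iff_inner_right.1 hv
    simp only [hw]
    rw [inner_sub_left, real_inner_smul_left, hkv, mul_zero, sub_zero]
  have hwnorm : ∀ σ ∈ S, ⟪w σ, w σ⟫ = 1 - ⟪k, σ⟫ ^ 2 := by
    intro σ hσ
    have hσσ : ⟪σ, σ⟫ = 1 := by
      have : ‖σ‖ = 1 := by simpa [hS, dist_eq_norm] using hσ
      rw [real_inner_self_eq_norm_sq, this]; norm_num
    simp only [hw, inner_sub_left, inner_sub_right, real_inner_smul_left, real_inner_smul_right,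
      hσσ, hkk]
    rw [real_inner_comm σ k]
    ring
  -- expansion of ⟪σ, Y⟫ and of ∑ ⟪σ, e i⟫²
  have key1 : ∀ σ : EuclideanSpace ℝ (Fin d), ⟪σ, Y⟫ = ∑ i, ⟪σ, e i⟫ * ⟪e i, Y⟫ := by
    intro σ
    rw [hinnw σ Y hYK, hexp (w σ) Y (hwK σ) hYK]
    exact Finset.sum_congr rfl fun i _ => by rw [← hinnw σ (e i) (heK i)]
  have key2 : ∀ σ ∈ S, ∑ i, ⟪σ, e i⟫ ^ 2 = 1 - ⟪k, σ⟫ ^ 2 := by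
    intro σ hσ
    calc ∑ i, ⟪σ, e i⟫ ^ 2
        = ∑ i, ⟪w σ, e i⟫ * ⟪e i, w σ⟫ := by
          refine Finset.sum_congr rfl fun i _ => ?_
          rw [hinnw σ (e i) (heK i), sq, real_inner_comm (w σ) (e i)]
      _ = ⟪w σ, w σ⟫ := (hexp (w σ) (w σ) (hwK σ) (hwK σ)).symm
      _ = 1 - ⟪k, σ⟫ ^ 2 := hwnorm σ hσ
  -- measurability
  have hms : ∀ u v : EuclideanSpace ℝ (Fin d),
      AEStronglyMeasurable (fun σ : EuclideanSpace ℝ (Fin d) => ⟪σ, u⟫ * ⟪σ, v⟫ * B ⟪k, σ⟫)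
      (μ.restrict S) := by
    intro u v
    have h1 : Continuous fun σ : EuclideanSpace ℝ (Fin d) => ⟪σ, u⟫ :=
      continuous_id.inner continuous_const
    have h2 : Continuous fun σ : EuclideanSpace ℝ (Fin d) => ⟪σ, v⟫ :=
      continuous_id.inner continuous_const
    have h3 : Continuous fun σ : EuclideanSpace ℝ (Fin d) => ⟪k, σ⟫ :=
      continuous_const.inner continuous_id
    exact (((h1.measurable.mul h2.measurable).mul
      (hBm.comp h3.measurable)).aestronglyMeasurable)
  -- integrability of the quadratic integrands
  have hintuv : ∀ u v : EuclideanSpace ℝ (Fin d), u ∈ K → v ∈ K →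
      IntegrableOn (fun σ : EuclideanSpace ℝ (Fin d) => ⟪σ, u⟫ * ⟪σ, v⟫ * B ⟪k, σ⟫) S μ := by
    intro u v hu hv
    refine Integrable.mono' (hInt.const_mul (‖u‖ * ‖v‖)) (hms u v) ?_
    refine (ae_restrict_iff' hSm).2 (ae_of_all _ fun σ hσ => ?_)
    have h1 : |⟪σ, u⟫| ≤ ‖w σ‖ * ‖u‖ := by
      rw [hinnw σ u hu]; exact abs_real_inner_le_norm _ _
    have h2 : |⟪σ, v⟫| ≤ ‖w σ‖ * ‖v‖ := by
      rw [hinnw σ v hv]; exact abs_real_inner_le_norm _ _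
    have h3 : ‖w σ‖ ^ 2 = 1 - ⟪k, σ⟫ ^ 2 := by
      rw [← real_inner_self_eq_norm_sq]; exact hwnorm σ hσ
    have hBnn : 0 ≤ B ⟪k, σ⟫ := hB _
    have habs : |⟪σ, u⟫ * ⟪σ, v⟫| ≤ (1 - ⟪k, σ⟫ ^ 2) * (‖u‖ * ‖v‖) := by
      rw [abs_mul]
      calc |⟪σ, u⟫| * |⟪σ, v⟫| ≤ (‖w σ‖ * ‖u‖) * (‖w σ‖ * ‖v‖) :=
            mul_le_mul h1 h2 (abs_nonneg _) (by positivity)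
        _ = ‖w σ‖ ^ 2 * (‖u‖ * ‖v‖) := by ring
        _ = (1 - ⟪k, σ⟫ ^ 2) * (‖u‖ * ‖v‖) := by rw [h3]
    have hnorm : ‖⟪σ, u⟫ * ⟪σ, v⟫ * B ⟪k, σ⟫‖ = |⟪σ, u⟫ * ⟪σ, v⟫| * B ⟪k, σ⟫ := by
      rw [Real.norm_eq_abs, abs_mul, abs_of_nonneg hBnn]
    rw [hnorm]
    calc |⟪σ, u⟫ * ⟪σ, v⟫| * B ⟪k, σ⟫
        ≤ ((1 - ⟪k, σ⟫ ^ 2) * (‖u‖ * ‖v‖)) * B ⟪k, σ⟫ :=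
          mul_le_mul_of_nonneg_right habs hBnn
      _ = ‖u‖ * ‖v‖ * ((1 - ⟪k, σ⟫ ^ 2) * B ⟪k, σ⟫) := by ring
  -- the matrix of second moments
  set M : Fin n → Fin n → ℝ :=
    fun i j => ∫ σ in S, ⟪σ, e i⟫ * ⟪σ, e j⟫ * B ⟪k, σ⟫ ∂μ with hM
  set I : ℝ := ∫ σ in S, (1 - ⟪k, σ⟫ ^ 2) * B ⟪k, σ⟫ ∂μ with hI
  -- Submodule.reflections fix the inner product with k
  have hrefl_k : ∀ v : EuclideanSpace ℝ (Fin d), ⟪v, k⟫ = 0 →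
      ∀ σ : EuclideanSpace ℝ (Fin d), ⟪k, Submodule.reflection (ℝ ∙ v)ᗮ σ⟫ = ⟪k, σ⟫ := by
    intro v hvk σ
    have hkmem : k ∈ (ℝ ∙ v)ᗮ :=
      Submodule.mem_orthogonal_singleton_iff_inner_left.2 (by rwa [real_inner_comm])
    have hRk : Submodule.reflection (ℝ ∙ v)ᗮ k = k := Submodule.reflection_mem_subspace_eq_self hkmem
    calc ⟪k, Submodule.reflection (ℝ ∙ v)ᗮ σ⟫
        = ⟪Submodule.reflection (ℝ ∙ v)ᗮ k, Submodule.reflection (ℝ ∙ v)ᗮ σ⟫ := by rw [hRk]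
      _ = ⟪k, σ⟫ := LinearIsometryEquiv.inner_map_map _ _ _
  -- off-diagonal entries vanish
  have hMoff : ∀ i j, i ≠ j → M i j = 0 := by
    intro i j hij
    set R := Submodule.reflection (ℝ ∙ (e i))ᗮ with hR
    have hRi : R (e i) = -(e i) := Submodule.reflection_orthogonalComplement_singleton_eq_neg (e i)
    have hRj : R (e j) = e j := by
      refine Submodule.reflection_mem_subspace_eq_self ?_
      exact Submodule.mem_orthogonal_singleton_iff_inner_left.2 (hee j i (Ne.symm hij))
    have hik : ⟪e i, k⟫ = 0 := by rw [real_inner_comm]; exact hke i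
    have hinn_i : ∀ σ : EuclideanSpace ℝ (Fin d), ⟪R σ, e i⟫ = -⟪σ, e i⟫ := by
      intro σ
      have hne : e i = R (-(e i)) := by rw [map_neg, hRi, neg_neg]
      conv_lhs => rw [hne]
      rw [LinearIsometryEquiv.inner_map_map, inner_neg_right]
    have hinn_j : ∀ σ : EuclideanSpace ℝ (Fin d), ⟪R σ, e j⟫ = ⟪σ, e j⟫ := by
      intro σ
      nth_rewrite 1 [hRj.symm]
      rw [LinearIsometryEquiv.inner_map_map]
    have hsub := subst_refl_aux R (fun σ => ⟪σ, e i⟫ * ⟪σ, e j⟫ * B ⟪k, σ⟫) ((d : ℝ) - 1)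
    have hMeq : M i j = -(M i j) := by
      calc M i j = ∫ σ in S, ⟪R σ, e i⟫ * ⟪R σ, e j⟫ * B ⟪k, R σ⟫ ∂μ := hsub.symm
        _ = ∫ σ in S, -(⟪σ, e i⟫ * ⟪σ, e j⟫ * B ⟪k, σ⟫) ∂μ := by
            refine setIntegral_congr_fun hSm fun σ _ => ?_
            rw [hinn_i, hinn_j, hrefl_k (e i) hik]
            ring
        _ = -(M i j) := by rw [integral_neg]
    linarith
  -- diagonal entries are all equal
  have hMdiag : ∀ i, M i i = M i0 i0 := by
    intro i
    set R := Submodule.reflection (ℝ ∙ (e i0 - e i))ᗮ with hR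
    have hR0 : R (e i0) = e i := Submodule.reflection_sub (by rw [hene, hene])
    have hRi : R (e i) = e i0 := by rw [← hR0, Submodule.reflection_reflection]
    have hvk : ⟪e i0 - e i, k⟫ = 0 := by
      have h0 : ⟪e i0, k⟫ = 0 := by rw [real_inner_comm]; exact hke i0
      have h1 : ⟪e i, k⟫ = 0 := by rw [real_inner_comm]; exact hke i
      rw [inner_sub_left, h0, h1, sub_self]
    have hinn0 : ∀ σ : EuclideanSpace ℝ (Fin d), ⟪R σ, e i0⟫ = ⟪σ, e i⟫ := by
      intro σ
      rw [← hRi, LinearIsometryEquiv.inner_map_map]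
    have hsub := subst_refl_aux R (fun σ => ⟪σ, e i0⟫ * ⟪σ, e i0⟫ * B ⟪k, σ⟫) ((d : ℝ) - 1)
    calc M i i = ∫ σ in S, ⟪R σ, e i0⟫ * ⟪R σ, e i0⟫ * B ⟪k, R σ⟫ ∂μ := by
          refine (setIntegral_congr_fun hSm fun σ _ => ?_).symm
          rw [hinn0, hrefl_k _ hvk]
      _ = M i0 i0 := hsub
  -- sum of diagonal entries
  have hMsum : ∑ i, M i i = I := by
    rw [hM, ← integral_finset_sum _ (fun i _ => hintuv (e i) (e i) (heK i) (heK i))]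
    refine setIntegral_congr_fun hSm fun σ hσ => ?_
    have h := key2 σ hσ
    calc ∑ i, ⟪σ, e i⟫ * ⟪σ, e i⟫ * B ⟪k, σ⟫
        = (∑ i, ⟪σ, e i⟫ ^ 2) * B ⟪k, σ⟫ := by
          rw [Finset.sum_mul]
          exact Finset.sum_congr rfl fun i _ => by ring
      _ = (1 - ⟪k, σ⟫ ^ 2) * B ⟪k, σ⟫ := by rw [h]
  have hM00 : M i0 i0 = I / n := by
    have hsum' : ∑ i, M i i = n * M i0 i0 := by
      rw [Finset.sum_congr rfl fun i _ => hMdiag i]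
      simp [Finset.card_univ]
    rw [hsum'] at hMsum
    field_simp
    linarith
  -- the integral of ⟪σ, Y⟫² B
  have hJ : (∫ σ in S, ⟪σ, Y⟫ ^ 2 * B ⟪k, σ⟫ ∂μ) = ‖Y‖ ^ 2 * (I / n) := by
    have hint_term : ∀ p : Fin n × Fin n,
        Integrable (fun σ : EuclideanSpace ℝ (Fin d) =>
          (⟪e p.1, Y⟫ * ⟪e p.2, Y⟫) * (⟪σ, e p.1⟫ * ⟪σ, e p.2⟫ * B ⟪k, σ⟫))
          (μ.restrict S) :=
      fun p => (hintuv (e p.1) (e p.2) (heK p.1) (heK p.2)).const_mul _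
    calc (∫ σ in S, ⟪σ, Y⟫ ^ 2 * B ⟪k, σ⟫ ∂μ)
        = ∫ σ in S, ∑ p : Fin n × Fin n,
            (⟪e p.1, Y⟫ * ⟪e p.2, Y⟫) * (⟪σ, e p.1⟫ * ⟪σ, e p.2⟫ * B ⟪k, σ⟫) ∂μ := by
          refine setIntegral_congr_fun hSm fun σ _ => ?_
          rw [key1 σ, sq, Finset.sum_mul_sum]
          rw [Fintype.sum_prod_type]
          rw [Finset.sum_mul]
          refine Finset.sum_congr rfl fun i _ => ?_
          rw [Finset.sum_mul]
          refine Finset.sum_congr rfl fun j _ => ?_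
          ring
      _ = ∑ p : Fin n × Fin n, ∫ σ in S,
            (⟪e p.1, Y⟫ * ⟪e p.2, Y⟫) * (⟪σ, e p.1⟫ * ⟪σ, e p.2⟫ * B ⟪k, σ⟫) ∂μ :=
          integral_finset_sum _ fun p _ => hint_term p
      _ = ∑ p : Fin n × Fin n, ⟪e p.1, Y⟫ * ⟪e p.2, Y⟫ * M p.1 p.2 := by
          refine Finset.sum_congr rfl fun p _ => ?_
          rw [integral_const_mul]
      _ = ∑ i, ⟪e i, Y⟫ * ⟪e i, Y⟫ * M i i := by
          rw [Fintype.sum_prod_type]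
          refine Finset.sum_congr rfl fun i _ => ?_
          rw [Finset.sum_eq_single i]
          · intro j _ hji; rw [hMoff i j (Ne.symm hji)]; ring
          · intro h; exact absurd (Finset.mem_univ i) h
      _ = ‖Y‖ ^ 2 * (I / n) := by
          have hYnorm : ‖Y‖ ^ 2 = ∑ i, ⟪e i, Y⟫ * ⟪e i, Y⟫ := by
            rw [← real_inner_self_eq_norm_sq, hexp Y Y hYK hYK]
            exact Finset.sum_congr rfl fun i _ => by rw [real_inner_comm Y (e i)]
          rw [hYnorm, Finset.sum_mul]
          refine Finset.sum_congr rfl fun i _ => ?_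
          rw [hMdiag i, hM00]
  -- integrability of the two pieces on the LHS
  have hint1 : IntegrableOn
      (fun σ : EuclideanSpace ℝ (Fin d) => ‖Y‖ ^ 2 * ((1 - ⟪k, σ⟫ ^ 2) * B ⟪k, σ⟫)) S μ :=
    hInt.const_mul _
  have hint2 : IntegrableOn
      (fun σ : EuclideanSpace ℝ (Fin d) => ⟪σ, Y⟫ ^ 2 * B ⟪k, σ⟫) S μ := by
    refine (hintuv Y Y hYK hYK).congr_fun (fun σ _ => ?_) hSm
    ring
  -- put everything together
  calc ∫ σ in S, (‖X‖ ^ 2 - ‖Pks k σ X‖ ^ 2) * B ⟪k, σ⟫ ∂μ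
      = ∫ σ in S, (‖Y‖ ^ 2 * ((1 - ⟪k, σ⟫ ^ 2) * B ⟪k, σ⟫) - ⟪σ, Y⟫ ^ 2 * B ⟪k, σ⟫) ∂μ := by
        refine setIntegral_congr_fun hSm fun σ hσ => ?_
        have hσn : ‖σ‖ = 1 := by simpa [hS, dist_eq_norm] using hσ
        rw [pks_defect_aux k σ X hk hσn]
        ring
    _ = ‖Y‖ ^ 2 * I - ‖Y‖ ^ 2 * (I / n) := by
        rw [integral_sub hint1 hint2, hJ, integral_const_mul, ← hI]
    _ = ((d : ℝ) - 2) / ((d : ℝ) - 1) * I * ‖Y‖ ^ 2 := by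
        have hd1 : (d : ℝ) - 1 ≠ 0 := by rw [← hnR]; exact hnne
        field_simp
        linear_combination (‖Y‖ ^ 2 * I) * hnR
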